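/- Let Φ be a root system in E and let T be a nonempty special closed subset of Φ. Then T + T is strictly contained in T, where T + T = {γ ∈ T : γ = α + β for some α, β ∈ T}; that is, there exists a root in T that is not the sum of two elements of T. -/

import Mathlib

open scoped RealInnerProductSpace

/-- The reflection determined by a root `α`: `s_α(x) = x - (2(x,α)/(α,α)) α`. -/
noncomputable def reflectRoot {E : Type*} [NormedAddCommGroup E] [InnerProductSpace ℝ E] (α x : E) : E :=
  x - (2 * ⟪x, α⟫ / ⟪α, α⟫) • α

/-- A root system in a finite-dimensional real inner product space. -/
def IsRootSystem {E : Type*} [NormedAddCommGroup E] [InnerProductSpace ℝ E] (Φ : Set E) : Prop :=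
  Φ.Finite ∧ Submodule.span ℝ Φ = ⊤ ∧ (0 : E) ∉ Φ ∧
    (∀ α ∈ Φ, ∀ t : ℝ, t • α ∈ Φ → t • α = α ∨ t • α = -α) ∧
    (∀ α ∈ Φ, ∀ β ∈ Φ, reflectRoot α β ∈ Φ) ∧
    (∀ α ∈ Φ, ∀ β ∈ Φ, ∃ n : ℤ, 2 * ⟪β, α⟫ / ⟪α, α⟫ = (n : ℝ))

/-- `T` is a closed subset of the root system `Φ`. -/
def IsClosedSub {E : Type*} [AddCommGroup E] (Φ T : Set E) : Prop :=
  T ⊆ Φ ∧ ∀ α ∈ T, ∀ β ∈ T, α + β ∈ Φ → α + β ∈ T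

/-- The symmetric part `T^r = {α ∈ T | -α ∈ T}`. -/
def symmPart {E : Type*} [AddCommGroup E] (T : Set E) : Set E := {α ∈ T | -α ∈ T}

/-- The special part `T^u = {α ∈ T | -α ∉ T}`. -/
def specPart {E : Type*} [AddCommGroup E] (T : Set E) : Set E := {α ∈ T | -α ∉ T}

/-- `T + T`: elements of `T` that are sums of two elements of `T`. -/
def sumSet {E : Type*} [AddCommGroup E] (T : Set E) : Set E :=
  {γ ∈ T | ∃ α ∈ T, ∃ β ∈ T, γ = α + β}

/-- The Weyl group of `Φ`: the subgroup of linear automorphisms of `E` generated by the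
reflections in the roots. -/
def weylGroup {E : Type*} [NormedAddCommGroup E] [InnerProductSpace ℝ E] (Φ : Set E) :
    Subgroup (E ≃ₗ[ℝ] E) :=
  Subgroup.closure {w | ∃ α ∈ Φ, ∀ x, w x = reflectRoot α x}

/-- `Φp` is a set of positive roots of `Φ`. -/
def IsPositiveSystem {E : Type*} [NormedAddCommGroup E] [InnerProductSpace ℝ E]
    (Φ Φp : Set E) : Prop :=
  ∃ f : E →ₗ[ℝ] ℝ, (∀ α ∈ Φ, f α ≠ 0) ∧ Φp = {α ∈ Φ | 0 < f α}

/-- For a nonempty special closed subset `T`, the set `T + T` is strictly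
contained in `T`. -/
lemma root_add_mem {E : Type*} [NormedAddCommGroup E] [InnerProductSpace ℝ E] {Φ : Set E}
    (hΦ : IsRootSystem Φ) {α β : E} (hα : α ∈ Φ) (hβ : β ∈ Φ) (hneg : ⟪α, β⟫ < 0) :
    β = -α ∨ α + β ∈ Φ := by
  obtain ⟨-, -, h0, hmul, hrefl, hint⟩ := hΦ
  have hα0 : α ≠ 0 := fun h => h0 (h ▸ hα)
  have hβ0 : β ≠ 0 := fun h => h0 (h ▸ hβ)
  have hαα : (0:ℝ) < ⟪α, α⟫ := by
    rw [real_inner_self_eq_norm_sq]; exact pow_pos (norm_pos_iff.mpr hα0) 2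
  have hββ : (0:ℝ) < ⟪β, β⟫ := by
    rw [real_inner_self_eq_norm_sq]; exact pow_pos (norm_pos_iff.mpr hβ0) 2
  by_cases hdep : ∃ t : ℝ, β = t • α
  · obtain ⟨t, rfl⟩ := hdep
    rcases hmul α hα t hβ with h | h
    · exfalso; rw [h] at hneg; linarith
    · left; exact h
  · right
    have hnα : ‖α‖ ≠ 0 := norm_ne_zero_iff.mpr hα0
    have hcs : ⟪α, -β⟫ < ‖α‖ * ‖-β‖ := by
      apply inner_lt_norm_mul_iff_real.mpr
      intro hcontra
      apply hdep
      refine ⟨-(‖-β‖) / ‖α‖, ?_⟩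
      have h2 : ‖α‖ • β = (-(‖-β‖)) • α := by
        rw [neg_smul, hcontra, smul_neg, neg_neg]
      calc β = (‖α‖⁻¹ * ‖α‖) • β := by rw [inv_mul_cancel₀ hnα, one_smul]
        _ = ‖α‖⁻¹ • (‖α‖ • β) := mul_smul _ _ _
        _ = ‖α‖⁻¹ • ((-(‖-β‖)) • α) := by rw [h2]
        _ = (-(‖-β‖) / ‖α‖) • α := by rw [smul_smul, div_eq_inv_mul, mul_comm]
    have hsq : ⟪α, β⟫ * ⟪α, β⟫ < ⟪α, α⟫ * ⟪β, β⟫ := by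
      rw [norm_neg, inner_neg_right] at hcs
      have h3 : (0:ℝ) < ‖α‖ * ‖β‖ :=
        mul_pos (norm_pos_iff.mpr hα0) (norm_pos_iff.mpr hβ0)
      have e1 := real_inner_self_eq_norm_sq α
      have e2 := real_inner_self_eq_norm_sq β
      nlinarith
    obtain ⟨n, hn⟩ := hint α hα β hβ
    obtain ⟨m, hm⟩ := hint β hβ α hα
    have hβα : ⟪β, α⟫ = ⟪α, β⟫ := real_inner_comm α β
    have hnneg : (n:ℝ) < 0 := by
      rw [← hn, hβα]; exact div_neg_of_neg_of_pos (by linarith) hαα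
    have hmneg : (m:ℝ) < 0 := by
      rw [← hm]; exact div_neg_of_neg_of_pos (by linarith) hββ
    have hprod : (n:ℝ) * m < 4 := by
      rw [← hn, ← hm, hβα, div_mul_div_comm, div_lt_iff₀ (mul_pos hαα hββ)]
      nlinarith
    have hn1 : n < 0 := by exact_mod_cast hnneg
    have hm1 : m < 0 := by exact_mod_cast hmneg
    have hprod' : n * m < 4 := by exact_mod_cast hprod
    have hone : n = -1 ∨ m = -1 := by
      by_contra h
      push_neg at h
      have h1 : n ≤ -2 := by omega
      have h2 : m ≤ -2 := by omega
      nlinarith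
    rcases hone with h | h
    · rw [h] at hn
      push_cast at hn
      have := hrefl α hα β hβ
      unfold reflectRoot at this
      rw [hn] at this
      simpa [add_comm] using this
    · rw [h] at hm
      push_cast at hm
      have := hrefl β hβ α hα
      unfold reflectRoot at this
      rw [hm] at this
      simpa using this

lemma no_zero_sum {E : Type*} [NormedAddCommGroup E] [InnerProductSpace ℝ E] {Φ T : Set E}
    (hΦ : IsRootSystem Φ) (hT1 : T ⊆ Φ) (hT2 : ∀ α ∈ T, ∀ β ∈ T, α + β ∈ Φ → α + β ∈ T)
    (hspec : ∀ α ∈ T, -α ∉ T) :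
    ∀ (n : ℕ) (s : Multiset E), s.card ≤ n → (∀ x ∈ s, x ∈ T) → s.sum = 0 → s = 0 := by
  intro n
  induction n with
  | zero => intro s hcard _ _; exact Multiset.card_eq_zero.mp (Nat.le_zero.mp hcard)
  | succ n ih =>
    intro s hcard hmem hsum
    by_cases hs : s = 0
    · exact hs
    exfalso
    obtain ⟨α, hαs⟩ := Multiset.exists_mem_of_ne_zero hs
    obtain ⟨s', rfl⟩ := Multiset.exists_cons_of_mem hαs
    have hαT : α ∈ T := hmem α (Multiset.mem_cons_self α s')
    have hαΦ : α ∈ Φ := hT1 hαT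
    have hα0 : α ≠ 0 := fun h => hΦ.2.2.1 (h ▸ hαΦ)
    have hαα : (0:ℝ) < ⟪α, α⟫ := by
      rw [real_inner_self_eq_norm_sq]; exact pow_pos (norm_pos_iff.mpr hα0) 2
    have hs'sum : s'.sum = -α := by
      have h : α + s'.sum = 0 := by rw [← Multiset.sum_cons]; exact hsum
      exact eq_neg_of_add_eq_zero_right h
    have hexists : ∃ β ∈ s', ⟪α, β⟫ < 0 := by
      by_contra h
      push_neg at h
      have hmapped : ⟪α, s'.sum⟫ = (s'.map (fun x => ⟪α, x⟫)).sum := by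
        have := map_multiset_sum (innerSL ℝ α) s'
        simpa using this
      have hnn : (0:ℝ) ≤ (s'.map (fun x => ⟪α, x⟫)).sum := by
        apply Multiset.sum_nonneg
        intro x hx
        obtain ⟨y, hy, rfl⟩ := Multiset.mem_map.mp hx
        exact h y hy
      rw [hs'sum, inner_neg_right] at hmapped
      linarith [hmapped ▸ hnn]
    obtain ⟨β, hβs', hβneg⟩ := hexists
    have hβT : β ∈ T := hmem β (Multiset.mem_cons_of_mem hβs')
    rcases root_add_mem hΦ hαΦ (hT1 hβT) hβneg with h | h
    · exact hspec α hαT (h ▸ hβT)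
    · have hsumT : α + β ∈ T := hT2 α hαT β hβT h
      obtain ⟨s'', rfl⟩ := Multiset.exists_cons_of_mem hβs'
      have hnew : ((α + β) ::ₘ s'') = 0 := by
        apply ih
        · simp only [Multiset.card_cons] at hcard ⊢
          omega
        · intro x hx
          rcases Multiset.mem_cons.mp hx with rfl | hx'
          · exact hsumT
          · exact hmem x (Multiset.mem_cons_of_mem (Multiset.mem_cons_of_mem hx'))
        · rw [Multiset.sum_cons]
          have := hsum
          rw [Multiset.sum_cons, Multiset.sum_cons] at this
          rw [add_assoc]
          exact this
      exact Multiset.cons_ne_zero hnew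

theorem sumSet_ssubset_of_special_closed {E : Type*} [NormedAddCommGroup E]
    [InnerProductSpace ℝ E] [FiniteDimensional ℝ E] (Φ T : Set E)
    (hΦ : IsRootSystem Φ) (hT : IsClosedSub Φ T) (hspec : ∀ α ∈ T, -α ∉ T)
    (hne : T.Nonempty) :
    sumSet T ⊂ T := by
  rw [Set.ssubset_def]
  refine ⟨fun x hx => hx.1, fun hsub2 => ?_⟩
  have hstep : ∀ x, x ∈ T → ∃ a, a ∈ T ∧ ∃ b, b ∈ T ∧ x = a + b := by
    intro x hx
    obtain ⟨-, a, ha, b, hb, hab⟩ := hsub2 hx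
    exact ⟨a, ha, b, hb, hab⟩
  choose! f hf g hg hfg using hstep
  obtain ⟨γ0, hγ0⟩ := hne
  set ρ : ℕ → E := fun n => g^[n] γ0 with hρ
  have hρsucc : ∀ n, ρ (n + 1) = g (ρ n) := fun n => Function.iterate_succ_apply' g n γ0
  have hρT : ∀ n, ρ n ∈ T := by
    intro n
    induction n with
    | zero => exact hγ0
    | succ n ih => rw [hρsucc]; exact hg _ ih
  have htel : ∀ n, ρ n = f (ρ n) + ρ (n + 1) := by
    intro n
    rw [hρsucc]
    exact hfg _ (hρT n)
  have hsumtel : ∀ m n, n ≤ m → ρ n = (∑ i ∈ Finset.Ico n m, f (ρ i)) + ρ m := by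
    intro m
    induction m with
    | zero => intro n hn; simp [Nat.le_zero.mp hn]
    | succ m ihm =>
      intro n hn
      rcases Nat.lt_or_ge m n with h | h
      · have : n = m + 1 := by omega
        subst this
        simp
      · rw [Finset.sum_Ico_succ_top h, ihm n h, add_assoc, ← htel m]
  have hTfin : T.Finite := hΦ.1.subset hT.1
  obtain ⟨n, -, m, -, hnm, heq⟩ :=
    Set.infinite_univ.exists_ne_map_eq_of_mapsTo (f := ρ) (fun n _ => hρT n) hTfin
  have key : ∀ a b : ℕ, a < b → ρ a = ρ b → False := by
    intro a b hab heq'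
    set s : Multiset E := (Finset.Ico a b).val.map (fun i => f (ρ i)) with hsdef
    have hsum0 : s.sum = 0 := by
      have h1 := hsumtel b a (le_of_lt hab)
      have h2 : (∑ i ∈ Finset.Ico a b, f (ρ i)) = s.sum := rfl
      rw [heq', h2, right_eq_add] at h1
      exact h1
    have hmem : ∀ x ∈ s, x ∈ T := by
      intro x hx
      obtain ⟨i, hi, rfl⟩ := Multiset.mem_map.mp hx
      exact hf _ (hρT i)
    have := no_zero_sum hΦ hT.1 hT.2 hspec s.card s le_rfl hmem hsum0
    have hcard : s.card = b - a := by simp [hsdef]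
    rw [this] at hcard
    simp at hcard
    omega
  rcases hnm.lt_or_gt with h | h
  · exact key n m h heq
  · exact key m n h heq.symm
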